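/- The axiom ΔC is not valid on the class of (cn)-frames: there exist a neighborhood model M = ⟨S, N, V⟩ whose neighborhood function at every state is closed under binary intersections and contains the unit S, a state s, and propositional variables p, q, such that M,s ⊨ Δp and M,s ⊨ Δq but M,s ⊭ Δ(p ∧ q). (A witness: S = {s,t,u}, N(s) = {{s},{s,t},S}, N(t) = N(u) = {S}, V(p) = {s,t}, V(q) = {t,u}.) -/

import Mathlib

/-- The language L(Δ) of contingency logic: φ ::= p | ¬φ | (φ ∧ φ) | Δφ. -/
inductive Formula (P : Type) : Type
  | atom : P → Formula P
  | neg : Formula P → Formula P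
  | and : Formula P → Formula P → Formula P
  | delta : Formula P → Formula P

namespace Formula

variable {P : Type}

/-- φ ∨ ψ abbreviates ¬(¬φ ∧ ¬ψ). -/
def or (φ ψ : Formula P) : Formula P := neg (and (neg φ) (neg ψ))

/-- φ → ψ abbreviates ¬(φ ∧ ¬ψ). -/
def imp (φ ψ : Formula P) : Formula P := neg (and φ (neg ψ))

/-- φ ↔ ψ abbreviates (φ → ψ) ∧ (ψ → φ). -/
def iffF (φ ψ : Formula P) : Formula P := and (imp φ ψ) (imp ψ φ)

end Formula

/-- ⊤ : a fixed tautology (p ∨ ¬p for a fixed propositional variable p). -/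
noncomputable def Formula.top (P : Type) [Nonempty P] : Formula P :=
  Formula.or (Formula.atom (Classical.arbitrary P))
    (Formula.neg (Formula.atom (Classical.arbitrary P)))

/-- A neighborhood model ⟨S, N, V⟩: a nonempty set of states `S`, a neighborhood
function `N : S → P(P(S))` and a valuation `V`. -/
structure NbhdModel (P : Type) where
  S : Type
  nonempty : Nonempty S
  N : S → Set (Set S)
  V : P → Set S

/-- The truth set ⟦φ⟧ of a formula in a neighborhood model; the clause for `Δφ` says
that a state `s` satisfies `Δφ` iff ⟦φ⟧ ∈ N(s) or S ∖ ⟦φ⟧ ∈ N(s). -/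
def NbhdModel.truthSet {P : Type} (M : NbhdModel P) : Formula P → Set M.S
  | .atom p => M.V p
  | .neg φ => (M.truthSet φ)ᶜ
  | .and φ ψ => M.truthSet φ ∩ M.truthSet ψ
  | .delta φ => {s | M.truthSet φ ∈ M.N s ∨ (M.truthSet φ)ᶜ ∈ M.N s}

/-- Satisfaction: M,s ⊨ φ. -/
def NbhdModel.sat {P : Type} (M : NbhdModel P) (s : M.S) (φ : Formula P) : Prop :=
  s ∈ M.truthSet φ

/-- Frame property (m): closure under supersets. -/
def SupersetClosed {S : Type} (N : S → Set (Set S)) : Prop :=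
  ∀ s : S, ∀ X Y : Set S, X ∈ N s → X ⊆ Y → Y ∈ N s

/-- Frame property (c): closure under binary intersections. -/
def InterClosed {S : Type} (N : S → Set (Set S)) : Prop :=
  ∀ s : S, ∀ X Y : Set S, X ∈ N s → Y ∈ N s → X ∩ Y ∈ N s

/-- Frame property (n): contains the unit. -/
def ContainsUnit {S : Type} (N : S → Set (Set S)) : Prop :=
  ∀ s : S, (Set.univ : Set S) ∈ N s

/-- Frame property (z): closure under complements. -/
def ComplClosed {S : Type} (N : S → Set (Set S)) : Prop :=
  ∀ s : S, ∀ X : Set S, X ∈ N s → Xᶜ ∈ N s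

/-- The supplementation of a neighborhood function:
`N⁺(s) = {X ⊆ S : Y ⊆ X for some Y ∈ N(s)}`. -/
def suppN {S : Type} (N : S → Set (Set S)) (s : S) : Set (Set S) :=
  {X | ∃ Y ∈ N s, Y ⊆ X}

/-- the axiom ΔC is not valid on the class of (cn)-frames: there exist a
(cn)-model, a state s and propositional variables p, q with M,s ⊨ Δp and M,s ⊨ Δq but
M,s ⊭ Δ(p ∧ q). -/
theorem deltaC_not_valid_on_cn_frames {P : Type} (p q : P) (hpq : p ≠ q) :
    ∃ (M : NbhdModel P) (s : M.S),
      InterClosed M.N ∧ ContainsUnit M.N ∧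
      M.sat s (Formula.delta (Formula.atom p)) ∧
      M.sat s (Formula.delta (Formula.atom q)) ∧
      ¬ M.sat s (Formula.delta (Formula.and (Formula.atom p) (Formula.atom q))) := by
  classical
  -- the witness model on Fin 3
  refine ⟨{ S := Fin 3
            nonempty := ⟨0⟩
            N := fun s => if s = 0 then {X | X = {0} ∨ X = {0,1} ∨ X = Set.univ}
                          else {Set.univ}
            V := fun r => if r = p then {0,1} else if r = q then {1,2} else ∅ }, 0, ?_, ?_, ?_, ?_, ?_⟩
  · -- InterClosed
    intro s X Y hX hY
    by_cases hs : s = 0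
    · subst hs
      simp only [if_pos rfl, Set.mem_setOf_eq] at hX hY ⊢
      have h01 : ({0} : Set (Fin 3)) ⊆ {0,1} := by intro x hx; simp at hx; simp [hx]
      rcases hX with rfl | rfl | rfl <;> rcases hY with rfl | rfl | rfl <;>
        simp [Set.inter_eq_left.mpr h01, Set.inter_eq_right.mpr h01, Set.inter_self]
    · simp only [if_neg hs, Set.mem_singleton_iff] at hX hY ⊢
      subst hX; subst hY; simp
  · -- ContainsUnit
    intro s
    by_cases hs : s = 0 <;> simp [hs]
  · -- Δp
    left
    simp [NbhdModel.truthSet, if_pos rfl]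
  · -- Δq
    right
    simp only [NbhdModel.sat, NbhdModel.truthSet, Set.mem_setOf_eq, if_neg (Ne.symm hpq),
      if_true]
    have : (({1,2} : Set (Fin 3)))ᶜ = {0} := by
      ext x; fin_cases x <;> simp
    rw [this]
    exact Or.inl rfl
  · -- ¬ Δ(p ∧ q)
    intro h
    have hset : ({0,1} : Set (Fin 3)) ∩ {1,2} = {1} := by
      ext x; fin_cases x <;> simp
    have hsetc : ({1} : Set (Fin 3))ᶜ = {0,2} := by
      ext x; fin_cases x <;> simp
    simp only [NbhdModel.sat, NbhdModel.truthSet, Set.mem_setOf_eq, if_pos rfl,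
      if_neg (Ne.symm hpq), if_true] at h
    rw [hset, hsetc] at h
    rcases h with (h | h | h) | (h | h | h) <;>
      simp [Set.ext_iff, Fin.forall_fin_succ] at h
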